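/- Let A' be a central arrangement in K^ℓ with maximal degree d_A' among a minimal set of homogeneous generators of D(A'). Then there is no hyperplane H ⊂ K^ℓ with H ∉ A' such that |A'| − d_{A'} > |(A' ∪ {H})^H|. Equivalently, for every hyperplane H not in A', |(A' ∪ {H})^H| ≥ |A'| − d_{A'}. -/

import Mathlib

open MvPolynomial

/-- The polynomial ring `S = K[x_1, ..., x_ℓ]`. -/
abbrev MvS (K : Type*) [Field K] (ℓ : ℕ) := MvPolynomial (Fin ℓ) K

variable {K : Type*} [Field K] {ℓ : ℕ}

/-- The linear functional on `K^ℓ` with coefficient vector `c`. -/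
noncomputable def ellf (c : Fin ℓ → K) : (Fin ℓ → K) →ₗ[K] K :=
  ∑ i, c i • LinearMap.proj i

/-- The hyperplane (through the origin) with coefficient vector `c`. -/
noncomputable def hypl (c : Fin ℓ → K) : Submodule K (Fin ℓ → K) :=
  LinearMap.ker (ellf c)

/-- The degree-one defining form `α = ∑ c_i x_i` of the hyperplane with coefficients `c`. -/
noncomputable def linForm (c : Fin ℓ → K) : MvS K ℓ := ∑ i, C (c i) * X i

/-- The defining polynomial `Q(A) = ∏_{H ∈ A} α_H` of an arrangement given by a finite
set of coefficient vectors. -/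
noncomputable def Qpoly (A : Finset (Fin ℓ → K)) : MvS K ℓ := ∏ c ∈ A, linForm c

/-- The module of logarithmic derivations of a reduced defining polynomial `Q`:
derivations `θ = ∑ θ_i ∂_i` (identified with their coefficient tuples) with `θ(Q) ∈ Q·S`. -/
def DerQ {K : Type*} [Field K] {ℓ : ℕ} (Q : MvS K ℓ) : Set (Fin ℓ → MvS K ℓ) :=
  {θ | Q ∣ ∑ i, θ i * pderiv i Q}

/-- The logarithmic derivation module `D(A)` of an arrangement. -/
noncomputable def DerA (A : Finset (Fin ℓ → K)) : Set (Fin ℓ → MvS K ℓ) :=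
  DerQ (Qpoly A)

/-- A derivation is homogeneous of degree `d` if all of its coefficient polynomials are. -/
def IsHomog {K : Type*} [Field K] {ℓ : ℕ} (θ : Fin ℓ → MvS K ℓ) (d : ℕ) : Prop :=
  ∀ i, (θ i).IsHomogeneous d

/-- A finite set of coefficient vectors honestly represents a central arrangement:
all forms are nonzero and no two define the same hyperplane. -/
def IsArrangement (A : Finset (Fin ℓ → K)) : Prop :=
  (∀ c ∈ A, c ≠ 0) ∧ ∀ c ∈ A, ∀ c' ∈ A, hypl c = hypl c' → c = c'

/-- `|(A ∪ {H})^H|`, the number of distinct intersections `H' ∩ H` for `H' ∈ A`. -/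
noncomputable def restrictCount (A : Finset (Fin ℓ → K)) (h : Fin ℓ → K) : ℕ :=
  letI := Classical.decEq (Submodule K (Fin ℓ → K))
  (A.image fun c => hypl c ⊓ hypl h).card

/-- `h` defines a genuine hyperplane that does not belong to the arrangement `A`. -/
def NotInArr (A : Finset (Fin ℓ → K)) (h : Fin ℓ → K) : Prop :=
  h ≠ 0 ∧ ∀ c ∈ A, hypl c ≠ hypl h

/-- `G` is a set of generators of `D(A)` as an `S`-module. -/
def Generates (A : Finset (Fin ℓ → K)) (G : Set (Fin ℓ → MvS K ℓ)) : Prop :=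
  (∀ θ ∈ G, θ ∈ DerA A) ∧ ∀ θ ∈ DerA A, θ ∈ Submodule.span (MvS K ℓ) G

/-- `G` is a minimal set of generators of `D(A)`. -/
def IsMinGen (A : Finset (Fin ℓ → K)) (G : Set (Fin ℓ → MvS K ℓ)) : Prop :=
  Generates A G ∧ ∀ G' ⊂ G, ¬ Generates A G'

/-- Every member of `G` is a nonzero homogeneous derivation. -/
def HomogGens {K : Type*} [Field K] {ℓ : ℕ} (G : Set (Fin ℓ → MvS K ℓ)) : Prop :=
  ∀ θ ∈ G, θ ≠ 0 ∧ ∃ d, IsHomog θ d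

/-- `d` is the maximal degree occurring among the (nonzero homogeneous) members of `G`. -/
def MaxDeg {K : Type*} [Field K] {ℓ : ℕ} (G : Set (Fin ℓ → MvS K ℓ)) (d : ℕ) : Prop :=
  (∀ θ ∈ G, ∀ e, IsHomog θ e → e ≤ d) ∧ ∃ θ ∈ G, IsHomog θ d

/-- The minimal restriction number `t_A`. -/
noncomputable def tA (A : Finset (Fin ℓ → K)) : ℕ :=
  sInf {n | ∃ h : Fin ℓ → K, NotInArr A h ∧ n = restrictCount A h}

/-- The intersection `∩_{c ∈ B} H_c` of the hyperplanes of `B`. -/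
noncomputable def interSub (B : Finset (Fin ℓ → K)) : Submodule K (Fin ℓ → K) :=
  ⨅ c ∈ B, hypl c

/-- The characteristic polynomial of a central arrangement, via Whitney's formula
`χ(A,t) = ∑_{B ⊆ A} (-1)^{|B|} t^{dim ∩B}`. -/
noncomputable def charPolyA (A : Finset (Fin ℓ → K)) : Polynomial ℤ :=
  ∑ B ∈ A.powerset,
    ((-1 : Polynomial ℤ) ^ B.card) * Polynomial.X ^ (Module.finrank K (interSub B))

/-- `D(Q)` is a free `S`-module with a homogeneous basis of degrees `e 0, ..., e (ℓ-1)`. -/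
def IsFreeQWithExp {K : Type*} [Field K] {ℓ : ℕ} (Q : MvS K ℓ) (e : Fin ℓ → ℕ) : Prop :=
  ∃ θ : Fin ℓ → (Fin ℓ → MvS K ℓ),
    (∀ i, θ i ∈ DerQ Q ∧ θ i ≠ 0 ∧ IsHomog (θ i) (e i)) ∧
    LinearIndependent (MvS K ℓ) θ ∧
    ∀ φ ∈ DerQ Q, φ ∈ Submodule.span (MvS K ℓ) (Set.range θ)

/-- `D(Q)` is a free `S`-module. -/
def IsFreeQ {K : Type*} [Field K] {ℓ : ℕ} (Q : MvS K ℓ) : Prop :=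
  ∃ e, IsFreeQWithExp Q e

/-- The arrangement `A` is free. -/
noncomputable def IsFreeArr (A : Finset (Fin ℓ → K)) : Prop := IsFreeQ (Qpoly A)

/-- The rank of a set of hyperplanes: the codimension of their common intersection,
i.e. the dimension of the span of their defining functionals. -/
noncomputable def rkSet (s : Set (Fin ℓ → K)) : ℕ :=
  Module.finrank K (Submodule.span K s)

/-- The Euler derivation `θ_E = ∑ x_i ∂_i`. -/
noncomputable def eulerDer (K : Type*) [Field K] (ℓ : ℕ) : Fin ℓ → MvS K ℓ :=
  fun i => X i

/-- `B` is solvable in `A` (Jambu–Papadima). -/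
def Solvable (B A : Finset (Fin ℓ → K)) : Prop :=
  B ⊆ A ∧
  (∀ α ∈ B, ∀ β ∈ B, α ≠ β → ∀ a ∈ A, a ∉ B → rkSet {α, β, a} = 3) ∧
  (∀ a ∈ A, a ∉ B → ∀ b ∈ A, b ∉ B → a ≠ b → ∃ α ∈ B, rkSet {a, b, α} = 2) ∧
  (∀ a ∈ A, a ∉ B → ∀ b ∈ A, b ∉ B → ∀ c ∈ A, c ∉ B →
    a ≠ b → a ≠ c → b ≠ c →
    ∀ α ∈ B, ∀ β ∈ B, ∀ γ ∈ B,
      rkSet {a, b, α} = 2 → rkSet {a, c, β} = 2 → rkSet {b, c, γ} = 2 →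
      rkSet {α, β, γ} ≤ 2)

/-- The hyperplane `{x_i = x_j}` of a graphic arrangement. -/
noncomputable def edgeHyp (K : Type*) [Field K] {ℓ : ℕ} (i j : Fin ℓ) :
    Submodule K (Fin ℓ → K) :=
  LinearMap.ker ((LinearMap.proj (R := K) (φ := fun _ : Fin ℓ => K) i
    - LinearMap.proj (R := K) (φ := fun _ : Fin ℓ => K) j))

/-- The coefficient vector of the form `x_i - x_j`. -/
def eform (K : Type*) [Field K] {ℓ : ℕ} (i j : Fin ℓ) : Fin ℓ → K :=
  fun t => if t = i then 1 else if t = j then -1 else 0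

/-- The set of defining forms of the graphic arrangement `A_G`. -/
noncomputable def graphForms (K : Type*) [Field K] {ℓ : ℕ} (G : SimpleGraph (Fin ℓ)) :
    Finset (Fin ℓ → K) :=
  letI := Classical.decEq (Fin ℓ → K)
  letI : DecidablePred (fun p : Fin ℓ × Fin ℓ => G.Adj p.1 p.2 ∧ p.1 < p.2) :=
    fun _ => Classical.propDecidable _
  Finset.image (fun p : Fin ℓ × Fin ℓ => eform K p.1 p.2)
    (Finset.univ.filter fun p : Fin ℓ × Fin ℓ => G.Adj p.1 p.2 ∧ p.1 < p.2)

/-- `Tri(G)`: the maximal number of new triangles created by adding a single edge. -/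
noncomputable def TriG {ℓ : ℕ} (G : SimpleGraph (Fin ℓ)) : ℕ :=
  sSup {n | ∃ u v : Fin ℓ, u ≠ v ∧ ¬ G.Adj u v ∧
    n = {w | G.Adj u w ∧ G.Adj v w}.ncard}
section AuxBasic
variable {K : Type*} [Field K] {ℓ : ℕ}

lemma ellf_apply (c x : Fin ℓ → K) : ellf c x = ∑ i, c i * x i := by
  simp [ellf]

lemma ellf_single (c : Fin ℓ → K) (j : Fin ℓ) : ellf c (Pi.single j 1) = c j := by
  rw [ellf_apply]
  rw [Finset.sum_eq_single j] <;> simp +contextual [Pi.single_apply]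

lemma ellf_smul (t : K) (c : Fin ℓ → K) (x : Fin ℓ → K) :
    ellf (t • c) x = t * ellf c x := by
  simp [ellf_apply, Finset.mul_sum, mul_assoc]

lemma ellf_add (a b : Fin ℓ → K) (x : Fin ℓ → K) :
    ellf (a + b) x = ellf a x + ellf b x := by
  simp [ellf_apply, add_mul, Finset.sum_add_distrib]

lemma hypl_smul {t : K} (ht : t ≠ 0) (c : Fin ℓ → K) : hypl (t • c) = hypl c := by
  ext x
  simp [hypl, LinearMap.mem_ker, ellf_smul, ht]

lemma hypl_le (c c' : Fin ℓ → K) (hc : c ≠ 0) (hc' : c' ≠ 0)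
    (hle : hypl c ≤ hypl c') : ∃ a : K, a ≠ 0 ∧ c' = a • c := by
  obtain ⟨j, hj⟩ := Function.ne_iff.mp hc
  simp only [Pi.zero_apply] at hj
  set x0 : Fin ℓ → K := (c j)⁻¹ • (Pi.single j 1 : Fin ℓ → K) with hx0
  have hcx0 : ellf c x0 = 1 := by
    rw [hx0, map_smul, ellf_single, smul_eq_mul, inv_mul_cancel₀ hj]
  refine ⟨ellf c' x0, ?_, ?_⟩
  · intro ha
    apply hc'
    funext j'
    have h1 : ellf c (Pi.single j' 1 - (ellf c (Pi.single j' 1)) • x0) = 0 := by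
      rw [map_sub, map_smul, hcx0, smul_eq_mul, mul_one, sub_self]
    have h2 := hle h1
    simp only [hypl, LinearMap.mem_ker, map_sub, map_smul, smul_eq_mul] at h2
    rw [ha, mul_zero, sub_zero, ellf_single] at h2
    exact h2
  · funext j'
    have h1 : ellf c (Pi.single j' 1 - (ellf c (Pi.single j' 1)) • x0) = 0 := by
      rw [map_sub, map_smul, hcx0, smul_eq_mul, mul_one, sub_self]
    have h2 := hle h1
    simp only [hypl, LinearMap.mem_ker, map_sub, map_smul, smul_eq_mul] at h2
    rw [sub_eq_zero, ellf_single, ellf_single] at h2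
    rw [Pi.smul_apply, smul_eq_mul, mul_comm]
    exact h2

lemma hypl_eq_iff {c c' : Fin ℓ → K} (hc : c ≠ 0) (hc' : c' ≠ 0) :
    hypl c = hypl c' ↔ ∃ a : K, a ≠ 0 ∧ c' = a • c := by
  constructor
  · intro he; exact hypl_le c c' hc hc' he.le
  · rintro ⟨a, ha, rfl⟩; exact (hypl_smul ha c).symm

end AuxBasic
section AuxLinForm
variable {K : Type*} [Field K] {ℓ : ℕ}

lemma linForm_smul (t : K) (c : Fin ℓ → K) : linForm (t • c) = C t * linForm c := by
  simp [linForm, Finset.mul_sum, mul_assoc]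

lemma linForm_add (a b : Fin ℓ → K) : linForm (a + b) = linForm a + linForm b := by
  simp [linForm, add_mul, Finset.sum_add_distrib]

lemma eval_linForm (x c : Fin ℓ → K) : eval x (linForm c) = ellf c x := by
  simp [linForm, ellf_apply]

lemma linForm_eq_zero_iff {c : Fin ℓ → K} : linForm c = 0 ↔ c = 0 := by
  constructor
  · intro h0
    funext j
    have := eval_linForm (Pi.single j 1) c
    rw [h0, map_zero, ellf_single] at this
    exact this.symm
  · rintro rfl; simp [linForm]

lemma pderiv_linForm (i : Fin ℓ) (c : Fin ℓ → K) :
    pderiv i (linForm c) = C (c i) := by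
  unfold linForm
  rw [map_sum, Finset.sum_eq_single i]
  · rw [pderiv_mul, pderiv_C, pderiv_X_self]; simp
  · intro j _ hj
    rw [pderiv_mul, pderiv_C, pderiv_X_of_ne hj]; simp
  · simp

lemma isHomogeneous_linForm (c : Fin ℓ → K) : (linForm c).IsHomogeneous 1 := by
  apply MvPolynomial.IsHomogeneous.sum
  intro i _
  exact MvPolynomial.isHomogeneous_C_mul_X _ _

lemma linForm_dvd {c c' : Fin ℓ → K} (hc : c ≠ 0) (hc' : c' ≠ 0)
    (hdvd : linForm c ∣ linForm c') : ∃ a : K, a ≠ 0 ∧ c' = a • c := by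
  obtain ⟨w, hw⟩ := hdvd
  apply hypl_le _ _ hc hc'
  intro x hx
  have hx0 : ellf c x = 0 := hx
  show ellf c' x = 0
  rw [← eval_linForm, hw, map_mul, eval_linForm, hx0, zero_mul]

lemma aeval_linForm (s : Fin ℓ → MvS K ℓ) (w : Fin ℓ → K) :
    aeval s (linForm w) = ∑ j, C (w j) * s j := by
  simp [linForm, MvPolynomial.algebraMap_eq]

lemma linForm_split (c : Fin ℓ → K) (i0 : Fin ℓ) :
    linForm c = C (c i0) * X i0 + linForm (Function.update c i0 0) := by
  unfold linForm
  have key : ∀ j : Fin ℓ, (C (c j) * X j : MvS K ℓ) =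
      (if j = i0 then C (c i0) * X i0 else 0) + C (Function.update c i0 0 j) * X j := by
    intro j
    by_cases hj : j = i0
    · subst hj; simp [Function.update]
    · simp [hj, Function.update, Function.update_of_ne hj]
  rw [Finset.sum_congr rfl (fun j _ => key j), Finset.sum_add_distrib,
    Finset.sum_ite_eq' Finset.univ i0]
  simp

lemma prime_X_mv {n : ℕ} (i : Fin (n + 1)) :
    Prime (X i : MvPolynomial (Fin (n + 1)) K) := by
  have h0 : Prime (X 0 : MvPolynomial (Fin (n + 1)) K) := by
    rw [← MulEquiv.prime_iff (MvPolynomial.finSuccEquiv K n).toMulEquiv]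
    show Prime ((MvPolynomial.finSuccEquiv K n) (X 0))
    rw [MvPolynomial.finSuccEquiv_X_zero]
    exact Polynomial.prime_X
  rw [← MulEquiv.prime_iff (MvPolynomial.renameEquiv K (Equiv.swap i 0)).toMulEquiv]
  show Prime ((MvPolynomial.renameEquiv K (Equiv.swap i 0)) (X i))
  rw [MvPolynomial.renameEquiv_apply, MvPolynomial.rename_X, Equiv.swap_apply_left]
  exact h0

lemma prime_linForm {c : Fin ℓ → K} (hc : c ≠ 0) : Prime (linForm c) := by
  obtain ⟨i0, hi0⟩ := Function.ne_iff.mp hc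
  simp only [Pi.zero_apply] at hi0
  obtain ⟨n, rfl⟩ : ∃ n, ℓ = n + 1 := ⟨ℓ - 1, (Nat.succ_pred_eq_of_pos i0.pos).symm⟩
  set c' := Function.update c i0 0 with hc'def
  have hc'i0 : c' i0 = 0 := by simp [hc'def]
  set Φ : MvS K (n+1) →ₐ[K] MvS K (n+1) :=
    aeval (fun i => if i = i0 then linForm c else X i) with hΦ
  set Ψ : MvS K (n+1) →ₐ[K] MvS K (n+1) :=
    aeval (fun i => if i = i0 then C (c i0)⁻¹ * (X i0 - linForm c') else X i) with hΨ
  have hlf : ∀ (s : Fin (n+1) → MvS K (n+1)) (w : Fin (n+1) → K), w i0 = 0 →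
      (∀ j, j ≠ i0 → s j = X j) → aeval s (linForm w) = linForm w := by
    intro s w hw hs
    rw [aeval_linForm]
    unfold linForm
    apply Finset.sum_congr rfl
    intro j _
    by_cases hj : j = i0
    · subst hj; rw [hw]; simp
    · rw [hs j hj]
  have hΦc' : Φ (linForm c') = linForm c' := by
    rw [hΦ]
    apply hlf _ _ hc'i0
    intro j hj; simp [hj]
  have hΨc' : Ψ (linForm c') = linForm c' := by
    rw [hΨ]
    apply hlf _ _ hc'i0
    intro j hj; simp [hj]
  have hsplit := linForm_split c i0
  have hcomp1 : ∀ j, Φ (Ψ (X j)) = X j := by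
    intro j
    by_cases hj : j = i0
    · rw [hj]
      have hx : Ψ (X i0) = C (c i0)⁻¹ * (X i0 - linForm c') := by
        rw [hΨ, aeval_X]; exact if_pos rfl
      rw [hx, map_mul, map_sub]
      have : Φ (X i0) = linForm c := by
        rw [hΦ, aeval_X]; exact if_pos rfl
      rw [this, hΦc']
      have : Φ (C (c i0)⁻¹) = C (c i0)⁻¹ := by
        rw [hΦ, aeval_C, MvPolynomial.algebraMap_eq]
      rw [this, hsplit]
      rw [add_sub_cancel_right, ← mul_assoc, ← map_mul, inv_mul_cancel₀ hi0]
      simp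
    · rw [hΨ]; simp only [aeval_X, if_neg hj]; rw [hΦ]; simp [hj]
  have hcomp2 : ∀ j, Ψ (Φ (X j)) = X j := by
    intro j
    by_cases hj : j = i0
    · rw [hj]
      have hx : Φ (X i0) = linForm c := by
        rw [hΦ, aeval_X]; exact if_pos rfl
      rw [hx, hsplit, map_add, map_mul, hΨc']
      have h1 : Ψ (X i0) = C (c i0)⁻¹ * (X i0 - linForm c') := by
        rw [hΨ, aeval_X]; exact if_pos rfl
      have h2 : Ψ (C (c i0)) = C (c i0) := by rw [hΨ, aeval_C, MvPolynomial.algebraMap_eq]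
      rw [h1, h2, ← mul_assoc, ← map_mul, mul_inv_cancel₀ hi0]
      simp
    · rw [hΦ]; simp only [aeval_X, if_neg hj]; rw [hΨ]; simp [hj]
  set E : MvS K (n+1) ≃ₐ[K] MvS K (n+1) :=
    AlgEquiv.ofAlgHom Φ Ψ
      (MvPolynomial.algHom_ext fun j => by simpa using hcomp1 j)
      (MvPolynomial.algHom_ext fun j => by simpa using hcomp2 j) with hE
  have hEX : E (X i0) = linForm c := by
    rw [hE]
    show Φ (X i0) = linForm c
    rw [hΦ, aeval_X]; exact if_pos rfl
  rw [← hEX]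
  exact ((MulEquiv.prime_iff E.toMulEquiv).mpr (prime_X_mv i0))

end AuxLinForm
section AuxDeriv
variable {K : Type*} [Field K] {ℓ : ℕ}

lemma pderiv_finset_prod {ι : Type*} [DecidableEq ι] (s : Finset ι)
    (f : ι → MvS K ℓ) (i : Fin ℓ) :
    pderiv i (∏ c ∈ s, f c) = ∑ c ∈ s, pderiv i (f c) * ∏ c' ∈ s.erase c, f c' := by
  induction s using Finset.induction with
  | empty => simp
  | @insert a s ha ih =>
    rw [Finset.prod_insert ha, pderiv_mul, ih, Finset.sum_insert ha,
      Finset.erase_insert ha, Finset.mul_sum]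
    congr 1
    apply Finset.sum_congr rfl
    intro c hc
    have hca : a ≠ c := fun he => ha (he ▸ hc)
    rw [Finset.erase_insert_of_ne hca, Finset.prod_insert
      (fun hmem => ha (Finset.mem_of_mem_erase hmem))]
    ring

lemma derA_dvd {A : Finset (Fin ℓ → K)} (hA : IsArrangement A) {θ : Fin ℓ → MvS K ℓ}
    (hθ : θ ∈ DerA A) {c : Fin ℓ → K} (hc : c ∈ A) :
    linForm c ∣ ∑ i, θ i * C (c i) := by
  classical
  have hc0 : c ≠ 0 := hA.1 c hc
  have hprime := prime_linForm hc0
  have hdvdQ : Qpoly A ∣ ∑ i, θ i * pderiv i (Qpoly A) := hθ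
  have hswap : ∑ i, θ i * pderiv i (Qpoly A)
      = ∑ c' ∈ A, (∑ i, θ i * C (c' i)) * ∏ c'' ∈ A.erase c', linForm c'' := by
    unfold Qpoly
    simp_rw [pderiv_finset_prod, pderiv_linForm, Finset.mul_sum]
    rw [Finset.sum_comm]
    apply Finset.sum_congr rfl
    intro c' _
    rw [Finset.sum_mul]
    apply Finset.sum_congr rfl
    intro i _
    ring
  have hLQ : linForm c ∣ Qpoly A := Finset.dvd_prod_of_mem _ hc
  have h1 : linForm c ∣
      (∑ i, θ i * C (c i)) * ∏ c'' ∈ A.erase c, linForm c''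
      + ∑ c' ∈ A.erase c, (∑ i, θ i * C (c' i)) * ∏ c'' ∈ A.erase c', linForm c'' := by
    have htot : linForm c ∣
        ∑ c' ∈ A, (∑ i, θ i * C (c' i)) * ∏ c'' ∈ A.erase c', linForm c'' := by
      rw [← hswap]; exact hLQ.trans hdvdQ
    rwa [← Finset.add_sum_erase _ _ hc] at htot
  have h2 : linForm c ∣
      ∑ c' ∈ A.erase c, (∑ i, θ i * C (c' i)) * ∏ c'' ∈ A.erase c', linForm c'' := by
    apply Finset.dvd_sum
    intro c' hc'
    have hcc' : c ≠ c' := fun he => (Finset.mem_erase.mp hc').1 he.symm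
    exact (Finset.dvd_prod_of_mem _ (Finset.mem_erase.mpr ⟨hcc', hc⟩)).mul_left _
  have h3 : linForm c ∣ (∑ i, θ i * C (c i)) * ∏ c'' ∈ A.erase c, linForm c'' := by
    have := dvd_sub h1 h2
    simpa using this
  have hnd : ¬ linForm c ∣ ∏ c'' ∈ A.erase c, linForm c'' := by
    intro hdd
    obtain ⟨c'', hc''mem, hdvd''⟩ := hprime.exists_mem_finset_dvd hdd
    have hcc'' := Finset.mem_erase.mp hc''mem
    obtain ⟨a, ha, hcc⟩ := linForm_dvd hc0 (hA.1 c'' hcc''.2) hdvd''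
    have heq : hypl c = hypl c'' := by rw [hcc, hypl_smul ha]
    exact hcc''.1 (hA.2 c'' hcc''.2 c hc heq.symm)
  exact (hprime.dvd_or_dvd h3).resolve_right hnd

lemma prod_pow_dvd {M : Type*} [CommMonoidWithZero M] [IsCancelMulZero M] {ι : Type*} [DecidableEq ι]
    (s : Finset ι) (p : ι → M) (k : ι → ℕ) (g : M)
    (hp : ∀ i ∈ s, Prime (p i)) (hnd : ∀ i ∈ s, ∀ j ∈ s, i ≠ j → ¬ p i ∣ p j)
    (hdvd : ∀ i ∈ s, p i ^ k i ∣ g) : (∏ i ∈ s, p i ^ k i) ∣ g := by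
  induction s using Finset.induction generalizing g with
  | empty => simp
  | @insert a s ha ih =>
    rw [Finset.prod_insert ha]
    obtain ⟨g', rfl⟩ := hdvd a (Finset.mem_insert_self a s)
    apply mul_dvd_mul_left
    refine ih _ (fun i hi => hp i (Finset.mem_insert_of_mem hi))
      (fun i hi j hj hij => hnd i (Finset.mem_insert_of_mem hi) j
        (Finset.mem_insert_of_mem hj) hij) ?_
    intro i hi
    have hia : i ≠ a := fun he => ha (he ▸ hi)
    have h1 : p i ^ k i ∣ p a ^ k a * g' := hdvd i (Finset.mem_insert_of_mem hi)
    have h2 : ¬ p i ∣ p a ^ k a := fun hd =>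
      hnd i (Finset.mem_insert_of_mem hi) a (Finset.mem_insert_self a s) hia
        ((hp i (Finset.mem_insert_of_mem hi)).dvd_of_dvd_pow hd)
    exact (hp i (Finset.mem_insert_of_mem hi)).pow_dvd_of_dvd_mul_left _ h2 h1

lemma degree_le_of_dvd_homog {P F : MvS K ℓ} {D e : ℕ}
    (hP : P.IsHomogeneous D) (hF : F.IsHomogeneous e) (hF0 : F ≠ 0)
    (hdvd : P ∣ F) : D ≤ e := by
  obtain ⟨w, rfl⟩ := hdvd
  obtain ⟨μ, hμ⟩ := MvPolynomial.exists_coeff_ne_zero hF0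
  have hPw : P * w = ∑ j ∈ Finset.range (w.totalDegree + 1),
      P * MvPolynomial.homogeneousComponent j w := by
    rw [← Finset.mul_sum, MvPolynomial.sum_homogeneousComponent]
  have hμ' : coeff μ (P * w) ≠ 0 := hμ
  rw [hPw] at hμ'
  rw [MvPolynomial.coeff_sum] at hμ'
  obtain ⟨j, _, hj⟩ := Finset.exists_ne_zero_of_sum_ne_zero hμ'
  have h1 : (Finsupp.weight 1) μ = D + j :=
    (hP.mul (MvPolynomial.homogeneousComponent_isHomogeneous j w)) hj
  have h2 : (Finsupp.weight 1) μ = e := hF hμ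
  omega

end AuxDeriv
section AuxSigma
variable {K : Type*} [Field K] {ℓ : ℕ}

lemma linForm_sub (a b : Fin ℓ → K) : linForm (a - b) = linForm a - linForm b := by
  simp [linForm, sub_mul, Finset.sum_sub_distrib]

/-- The substitution onto the hyperplane of `h` (eliminating in direction `i0`). -/
noncomputable def sigmaMap (h : Fin ℓ → K) (i0 : Fin ℓ) : MvS K ℓ →ₐ[K] MvS K ℓ :=
  aeval (fun i => if i = i0 then X i0 - C (h i0)⁻¹ * linForm h else X i)

lemma sigma_linForm (h : Fin ℓ → K) (i0 : Fin ℓ) (c : Fin ℓ → K) :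
    sigmaMap h i0 (linForm c) = linForm (c - (c i0 * (h i0)⁻¹) • h) := by
  unfold sigmaMap
  rw [aeval_linForm]
  have key : ∀ j : Fin ℓ, C (c j) * (if j = i0 then X i0 - C (h i0)⁻¹ * linForm h else X j)
      = C (c j) * X j - (if j = i0 then C (c i0) * (C (h i0)⁻¹ * linForm h) else 0) := by
    intro j
    by_cases hj : j = i0
    · rw [hj, if_pos rfl, if_pos rfl]; ring
    · rw [if_neg hj, if_neg hj, sub_zero]
  rw [Finset.sum_congr rfl (fun j _ => key j), Finset.sum_sub_distrib,
    Finset.sum_ite_eq' Finset.univ i0]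
  simp only [Finset.mem_univ, if_pos]
  rw [linForm_sub, linForm_smul]
  show linForm c - C (c i0) * (C (h i0)⁻¹ * linForm h)
      = linForm c - C (c i0 * (h i0)⁻¹) * linForm h
  rw [map_mul, mul_assoc]

lemma sigma_alpha (h : Fin ℓ → K) {i0 : Fin ℓ} (hi0 : h i0 ≠ 0) :
    sigmaMap h i0 (linForm h) = 0 := by
  rw [sigma_linForm, mul_inv_cancel₀ hi0, one_smul, sub_self]
  exact linForm_eq_zero_iff.mpr rfl

lemma sigma_mod (h : Fin ℓ → K) (i0 : Fin ℓ) (f : MvS K ℓ) :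
    f - sigmaMap h i0 f ∈ Ideal.span {linForm h} := by
  set I := Ideal.span {linForm h} with hI
  have hcomp : (Ideal.Quotient.mkₐ K I).comp (sigmaMap h i0) = Ideal.Quotient.mkₐ K I := by
    apply MvPolynomial.algHom_ext
    intro j
    simp only [AlgHom.comp_apply, Ideal.Quotient.mkₐ_eq_mk]
    rw [show (sigmaMap h i0) (X j)
        = (if j = i0 then X i0 - C (h i0)⁻¹ * linForm h else X j) from aeval_X _ j]
    by_cases hj : j = i0
    · rw [if_pos hj, hj]
      rw [Ideal.Quotient.eq]
      rw [sub_sub_cancel_left]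
      apply neg_mem
      exact Ideal.mem_span_singleton.mpr ⟨C (h i0)⁻¹, mul_comm _ _⟩
    · rw [if_neg hj]
  have := congrArg (fun φ => φ f) hcomp
  simp only [AlgHom.comp_apply, Ideal.Quotient.mkₐ_eq_mk] at this
  rw [← Ideal.Quotient.eq] at *
  rw [this]

lemma sigma_ne_zero (h : Fin ℓ → K) (i0 : Fin ℓ) {f : MvS K ℓ}
    (hf : f ∉ Ideal.span {linForm h}) : sigmaMap h i0 f ≠ 0 := by
  intro h0
  apply hf
  have := sigma_mod h i0 f
  rw [h0, sub_zero] at this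
  exact this

lemma sigma_homog (h : Fin ℓ → K) (i0 : Fin ℓ) {f : MvS K ℓ} {n : ℕ}
    (hf : f.IsHomogeneous n) : (sigmaMap h i0 f).IsHomogeneous n := by
  have hg : ∀ i : Fin ℓ,
      ((fun i => if i = i0 then X i0 - C (h i0)⁻¹ * linForm h else X i) i).IsHomogeneous 1 := by
    intro i
    show (if i = i0 then X i0 - C (h i0)⁻¹ * linForm h else X i).IsHomogeneous 1
    by_cases hj : i = i0
    · rw [if_pos hj]
      exact (MvPolynomial.isHomogeneous_X K i0).sub ((isHomogeneous_linForm h).C_mul _)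
    · rw [if_neg hj]; exact MvPolynomial.isHomogeneous_X K i
  have := hf.aeval _ hg
  simpa [sigmaMap] using this

lemma fiber_eq {h cs : Fin ℓ → K} (a : K) {b : K} (hb : b ≠ 0) :
    hypl (a • h + b • cs) ⊓ hypl h = hypl cs ⊓ hypl h := by
  ext x
  simp only [Submodule.mem_inf, hypl, LinearMap.mem_ker, ellf_add, ellf_smul]
  constructor
  · rintro ⟨h1, h2⟩
    refine ⟨?_, h2⟩
    rw [h2, mul_zero, zero_add] at h1
    rcases mul_eq_zero.mp h1 with h' | h'
    · exact absurd h' hb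
    · exact h'
  · rintro ⟨h1, h2⟩
    exact ⟨by rw [h1, h2, mul_zero, mul_zero, add_zero], h2⟩

lemma fiber_decomp {h c cs : Fin ℓ → K} (hh0 : h ≠ 0) (hc0 : c ≠ 0) (hcs0 : cs ≠ 0)
    (hch : hypl c ≠ hypl h) (hcsh : hypl cs ≠ hypl h)
    (heq : hypl c ⊓ hypl h = hypl cs ⊓ hypl h) :
    ∃ a b : K, b ≠ 0 ∧ c = a • h + b • cs := by
  -- find x with ellf h x = 1, ellf cs x = 0
  have hns : ¬ hypl cs ≤ hypl h := by
    intro hle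
    obtain ⟨a, ha, hha⟩ := hypl_le cs h hcs0 hh0 hle
    exact hcsh (by rw [hha, hypl_smul ha])
  have hns' : ¬ hypl h ≤ hypl cs := by
    intro hle
    obtain ⟨a, ha, hha⟩ := hypl_le h cs hh0 hcs0 hle
    have : hypl cs = hypl h := by rw [hha, hypl_smul ha]
    exact hcsh this
  obtain ⟨x', hx'⟩ : ∃ x', x' ∈ hypl cs ∧ x' ∉ hypl h := by
    by_contra hno
    push_neg at hno
    exact hns hno
  obtain ⟨y', hy'⟩ : ∃ y', y' ∈ hypl h ∧ y' ∉ hypl cs := by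
    by_contra hno
    push_neg at hno
    exact hns' hno
  have hx'h : ellf h x' ≠ 0 := hx'.2
  have hy'cs : ellf cs y' ≠ 0 := hy'.2
  have hx'cs : ellf cs x' = 0 := hx'.1
  have hy'h : ellf h y' = 0 := hy'.1
  obtain ⟨x, hhx, hcsx⟩ : ∃ x : Fin ℓ → K, ellf h x = 1 ∧ ellf cs x = 0 :=
    ⟨(ellf h x')⁻¹ • x', by rw [map_smul, smul_eq_mul, inv_mul_cancel₀ hx'h],
      by rw [map_smul, smul_eq_mul, hx'cs, mul_zero]⟩
  obtain ⟨y, hcsy, hhy⟩ : ∃ y : Fin ℓ → K, ellf cs y = 1 ∧ ellf h y = 0 :=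
    ⟨(ellf cs y')⁻¹ • y', by rw [map_smul, smul_eq_mul, inv_mul_cancel₀ hy'cs],
      by rw [map_smul, smul_eq_mul, hy'h, mul_zero]⟩
  have key : ∀ z : Fin ℓ → K, ellf c z = ellf c x * ellf h z + ellf c y * ellf cs z := by
    intro z
    obtain ⟨z', hz'⟩ : ∃ z', z' = z - (ellf h z) • x - (ellf cs z) • y := ⟨_, rfl⟩
    have hz'cs : ellf cs z' = 0 := by
      rw [hz', map_sub, map_sub, map_smul, map_smul, hcsx, hcsy]
      simp
    have hz'h : ellf h z' = 0 := by
      rw [hz', map_sub, map_sub, map_smul, map_smul, hhx, hhy]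
      simp
    have hz'mem : z' ∈ hypl c ⊓ hypl h := by
      rw [heq]; exact Submodule.mem_inf.mpr ⟨hz'cs, hz'h⟩
    have hz'c : ellf c z' = 0 := (Submodule.mem_inf.mp hz'mem).1
    rw [hz', map_sub, map_sub, map_smul, map_smul] at hz'c
    simp only [smul_eq_mul] at hz'c
    have : ellf c z = ellf h z * ellf c x + ellf cs z * ellf c y := by
      linear_combination hz'c
    rw [this]; ring
  refine ⟨ellf c x, ellf c y, ?_, ?_⟩
  · intro hb0
    apply hch
    have hcah : c = (ellf c x) • h := by
      funext j
      have := key (Pi.single j 1)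
      rw [ellf_single, ellf_single, ellf_single, hb0, zero_mul, add_zero] at this
      rw [Pi.smul_apply, smul_eq_mul, this]
    have ha0 : ellf c x ≠ 0 := by
      intro h0; apply hc0; rw [hcah, h0, zero_smul]
    rw [hcah, hypl_smul ha0]
  · funext j
    have := key (Pi.single j 1)
    rw [ellf_single, ellf_single, ellf_single] at this
    simp only [Pi.add_apply, Pi.smul_apply, smul_eq_mul]
    rw [this]

end AuxSigma
/-- for any hyperplane `H ∉ A'` we have `|(A' ∪ {H})^H| ≥ |A'| - d_{A'}`. -/
theorem stmt3 {K : Type*} [Field K] [CharZero K] {ℓ : ℕ}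
    (A' : Finset (Fin ℓ → K)) (hA' : IsArrangement A')
    (G : Set (Fin ℓ → MvS K ℓ)) (hmin : IsMinGen A' G) (hhom : HomogGens G)
    (d : ℕ) (hd : MaxDeg G d)
    (h : Fin ℓ → K) (hh : NotInArr A' h) :
    A'.card ≤ restrictCount A' h + d := by
  classical
  rcases Finset.eq_empty_or_nonempty A' with rfl | hAne
  · simp
  obtain ⟨h0, hnot⟩ := hh
  obtain ⟨i0, hi0⟩ := Function.ne_iff.mp h0
  simp only [Pi.zero_apply] at hi0
  set α := linForm h with hαdef
  have hprimeα : Prime α := prime_linForm h0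
  have hnotdvd : ∀ c ∈ A', ¬ α ∣ linForm c := by
    intro c hcA hdvd
    obtain ⟨a, ha, hca⟩ := linForm_dvd h0 (hA'.1 c hcA) hdvd
    exact hnot c hcA (by rw [hca, hypl_smul ha])
  have hQnotin : Qpoly A' ∉ Ideal.span {α} := by
    rw [Ideal.mem_span_singleton]
    intro hdvd
    obtain ⟨c, hcA, hdvd'⟩ := hprimeα.exists_mem_finset_dvd hdvd
    exact hnotdvd c hcA hdvd'
  -- Step B : special derivation
  have hθstarDer : (fun i => C (if i = i0 then (h i0)⁻¹ else 0) * Qpoly A') ∈ DerA A' := by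
    show Qpoly A' ∣ _
    have heq : ∑ i, (C (if i = i0 then (h i0)⁻¹ else 0) * Qpoly A') * pderiv i (Qpoly A')
        = Qpoly A' * ∑ i, C (if i = i0 then (h i0)⁻¹ else 0) * pderiv i (Qpoly A') := by
      rw [Finset.mul_sum]
      apply Finset.sum_congr rfl
      intro i _
      ring
    rw [heq]
    exact Dvd.intro _ rfl
  have hΛθstar : ∑ i, (C (if i = i0 then (h i0)⁻¹ else 0) * Qpoly A') * C (h i)
      = Qpoly A' := by
    rw [Finset.sum_eq_single i0]
    · rw [if_pos rfl, mul_comm (C (h i0)⁻¹) (Qpoly A'), mul_assoc, ← map_mul,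
        inv_mul_cancel₀ hi0, map_one, mul_one]
    · intro j _ hj
      rw [if_neg hj, map_zero, zero_mul, zero_mul]
    · simp
  -- Step C : a generator not tangent to H
  have hex : ∃ θ0 ∈ G, (∑ i, θ0 i * C (h i)) ∉ Ideal.span {α} := by
    by_contra hno
    push_neg at hno
    -- the S-linear evaluation map
    let Λ : (Fin ℓ → MvS K ℓ) →ₗ[MvS K ℓ] MvS K ℓ :=
      { toFun := fun θ => ∑ i, θ i * C (h i)
        map_add' := by
          intro θ θ'
          simp [add_mul, Finset.sum_add_distrib]
        map_smul' := by
          intro s θ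
          simp only [Pi.smul_apply, smul_eq_mul, RingHom.id_apply, Finset.mul_sum]
          apply Finset.sum_congr rfl
          intro i _
          ring }
    have hGsub : G ⊆ (Submodule.comap Λ
        (Ideal.span {α} : Ideal (MvS K ℓ)) : Set (Fin ℓ → MvS K ℓ)) := by
      intro θ hθ
      exact hno θ hθ
    have hspan := Submodule.span_le.mpr hGsub
    have hmem := hspan (hmin.1.2 _ hθstarDer)
    have : (∑ i, (C (if i = i0 then (h i0)⁻¹ else 0) * Qpoly A') * C (h i))
        ∈ Ideal.span {α} := hmem
    rw [hΛθstar] at this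
    exact hQnotin this
  obtain ⟨θ0, hθ0G, hu⟩ := hex
  obtain ⟨hθ0ne, e, hθ0e⟩ := hhom θ0 hθ0G
  have hed : e ≤ d := hd.1 θ0 hθ0G e hθ0e
  have hθ0Der : θ0 ∈ DerA A' := hmin.1.1 θ0 hθ0G
  have hu_hom : (∑ i, θ0 i * C (h i)).IsHomogeneous e := by
    apply MvPolynomial.IsHomogeneous.sum
    intro i _
    simpa using (hθ0e i).mul (MvPolynomial.isHomogeneous_C _ (h i))
  have hσu_ne : sigmaMap h i0 (∑ i, θ0 i * C (h i)) ≠ 0 := sigma_ne_zero h i0 hu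
  have hσu_hom : (sigmaMap h i0 (∑ i, θ0 i * C (h i))).IsHomogeneous e :=
    sigma_homog h i0 hu_hom
  -- the fibration data
  have htcount : restrictCount A' h = (A'.image fun c => hypl c ⊓ hypl h).card := rfl
  -- key per-fiber divisibility
  have key : ∀ cs ∈ A',
      (sigmaMap h i0 (linForm cs)) ^
        ((A'.filter fun c => hypl c ⊓ hypl h = hypl cs ⊓ hypl h).card - 1)
        ∣ sigmaMap h i0 (∑ i, θ0 i * C (h i)) := by
    intro cs hcsA
    set u := ∑ i, θ0 i * C (h i) with hudef
    set β := linForm cs with hβdef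
    set v := ∑ i, θ0 i * C (cs i) with hvdef
    set Fb := A'.filter fun c => hypl c ⊓ hypl h = hypl cs ⊓ hypl h with hFbdef
    have hstep : ∀ c ∈ Fb, linForm c ∣ α * v - β * u := by
      intro c hc
      obtain ⟨hcA, hcX⟩ := Finset.mem_filter.mp hc
      obtain ⟨a, b, hb, hcab⟩ := fiber_decomp h0 (hA'.1 c hcA) (hA'.1 cs hcsA)
        (hnot c hcA) (hnot cs hcsA) hcX
      have hLc : linForm c = C a * α + C b * β := by
        rw [hcab, linForm_add, linForm_smul, linForm_smul, hαdef, hβdef]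
      have hθLc : ∑ i, θ0 i * C (c i) = C a * u + C b * v := by
        rw [hudef, hvdef, hcab, Finset.mul_sum, Finset.mul_sum, ← Finset.sum_add_distrib]
        apply Finset.sum_congr rfl
        intro i _
        simp only [Pi.add_apply, Pi.smul_apply, smul_eq_mul, map_add, map_mul]
        ring
      have hdvd1 : linForm c ∣ ∑ i, θ0 i * C (c i) := derA_dvd hA' hθ0Der hcA
      have hdvd2 : linForm c ∣ C b * (α * v - β * u) := by
        have hid : α * (C a * u + C b * v) - (C a * α + C b * β) * u
            = C b * (α * v - β * u) := by ring
        rw [← hid]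
        apply dvd_sub
        · rw [← hθLc]
          exact hdvd1.mul_left α
        · rw [← hLc]
          exact Dvd.intro u rfl
      have hcancel : (C b⁻¹ : MvS K ℓ) * (C b * (α * v - β * u)) = α * v - β * u := by
        rw [← mul_assoc, ← map_mul, inv_mul_cancel₀ hb, map_one, one_mul]
      exact hcancel ▸ hdvd2.mul_left (C b⁻¹)
    have hprod : (∏ c ∈ Fb, linForm c) ∣ α * v - β * u := by
      have := prod_pow_dvd Fb (fun c => linForm c) (fun _ => 1) (α * v - β * u)
        (fun c hc => prime_linForm (hA'.1 c (Finset.mem_filter.mp hc).1))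
        (fun c hc c' hc' hne hdvd => by
          obtain ⟨a, ha, hca⟩ := linForm_dvd (hA'.1 c (Finset.mem_filter.mp hc).1)
            (hA'.1 c' (Finset.mem_filter.mp hc').1) hdvd
          have : hypl c = hypl c' := by rw [hca, hypl_smul ha]
          exact hne (hA'.2 c (Finset.mem_filter.mp hc).1 c' (Finset.mem_filter.mp hc').1 this))
        (fun c hc => by rw [pow_one]; exact hstep c hc)
      simpa [pow_one] using this
    -- push through σ
    have hσstep : ∀ c ∈ Fb, sigmaMap h i0 β ∣ sigmaMap h i0 (linForm c) := by
      intro c hc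
      obtain ⟨hcA, hcX⟩ := Finset.mem_filter.mp hc
      obtain ⟨a, b, hb, hcab⟩ := fiber_decomp h0 (hA'.1 c hcA) (hA'.1 cs hcsA)
        (hnot c hcA) (hnot cs hcsA) hcX
      have hLc : linForm c = C a * α + C b * β := by
        rw [hcab, linForm_add, linForm_smul, linForm_smul, hαdef, hβdef]
      rw [hLc, map_add, map_mul, map_mul, hαdef, sigma_alpha h hi0, mul_zero, zero_add]
      exact Dvd.intro_left _ rfl
    have hσpow : (sigmaMap h i0 β) ^ Fb.card ∣ sigmaMap h i0 (α * v - β * u) := by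
      have h1 : (sigmaMap h i0 β) ^ Fb.card = ∏ _c ∈ Fb, sigmaMap h i0 β := by
        rw [Finset.prod_const]
      rw [h1]
      calc (∏ _c ∈ Fb, sigmaMap h i0 β) ∣ ∏ c ∈ Fb, sigmaMap h i0 (linForm c) :=
            Finset.prod_dvd_prod_of_dvd _ _ hσstep
        _ = sigmaMap h i0 (∏ c ∈ Fb, linForm c) := (map_prod _ _ _).symm
        _ ∣ sigmaMap h i0 (α * v - β * u) := map_dvd _ hprod
    have hσD : sigmaMap h i0 (α * v - β * u)
        = -(sigmaMap h i0 β * sigmaMap h i0 u) := by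
      rw [map_sub, map_mul, map_mul, hαdef, sigma_alpha h hi0, zero_mul, zero_sub]
    have hσβ : sigmaMap h i0 β ≠ 0 := by
      apply sigma_ne_zero
      rw [Ideal.mem_span_singleton]
      exact hnotdvd cs hcsA
    have hm1 : 1 ≤ Fb.card := by
      apply Finset.card_pos.mpr
      exact ⟨cs, Finset.mem_filter.mpr ⟨hcsA, rfl⟩⟩
    rw [hσD, dvd_neg] at hσpow
    obtain ⟨g, hg⟩ := hσpow
    have hFbsucc : Fb.card = (Fb.card - 1) + 1 := (Nat.succ_pred_eq_of_pos hm1).symm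
    rw [hFbsucc, pow_succ] at hg
    have : sigmaMap h i0 u = (sigmaMap h i0 β) ^ (Fb.card - 1) * g := by
      apply mul_left_cancel₀ hσβ
      rw [hg]; ring
    exact Dvd.intro g this.symm
  -- choose representatives of the fibers
  set img := (A'.image fun c => hypl c ⊓ hypl h) with himgdef
  have hrep : ∀ X ∈ img, ∃ cs, cs ∈ A' ∧
      hypl cs ⊓ hypl h = X := by
    intro X hX
    obtain ⟨cs, hcs, hcs'⟩ := Finset.mem_image.mp hX
    exact ⟨cs, hcs, hcs'⟩
  choose rep hrepA hrepX using hrep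
  -- nonzero projected forms
  have hproj : ∀ cs ∈ A', sigmaMap h i0 (linForm cs)
      = linForm (cs - (cs i0 * (h i0)⁻¹) • h) ∧ cs - (cs i0 * (h i0)⁻¹) • h ≠ 0 := by
    intro cs hcsA
    refine ⟨sigma_linForm h i0 cs, ?_⟩
    intro hz
    have hcs : cs = (cs i0 * (h i0)⁻¹) • h := by
      have := sub_eq_zero.mp hz
      exact this
    have hne : cs i0 * (h i0)⁻¹ ≠ 0 := by
      intro h00
      apply hA'.1 cs hcsA
      rw [hcs, h00, zero_smul]
    exact hnot cs hcsA (by rw [hcs, hypl_smul hne])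
  -- combine over all fibers
  have hcomb : (∏ X ∈ img.attach,
      (sigmaMap h i0 (linForm (rep X.1 X.2))) ^
        ((A'.filter fun c => hypl c ⊓ hypl h = X.1).card - 1))
      ∣ sigmaMap h i0 (∑ i, θ0 i * C (h i)) := by
    apply prod_pow_dvd
    · intro X _
      obtain ⟨hformula, hne⟩ := hproj (rep X.1 X.2) (hrepA X.1 X.2)
      rw [hformula]
      exact prime_linForm hne
    · intro X _ Y _ hXY hdvd
      obtain ⟨hfX, hneX⟩ := hproj (rep X.1 X.2) (hrepA X.1 X.2)
      obtain ⟨hfY, hneY⟩ := hproj (rep Y.1 Y.2) (hrepA Y.1 Y.2)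
      rw [hfX, hfY] at hdvd
      obtain ⟨a, ha, hca⟩ := linForm_dvd hneX hneY hdvd
      -- rep Y = μ • h + a • rep X
      have hrepeq : rep Y.1 Y.2
          = ((rep Y.1 Y.2) i0 * (h i0)⁻¹ - a * ((rep X.1 X.2) i0 * (h i0)⁻¹)) • h
            + a • rep X.1 X.2 := by
        have := hca
        funext j
        have hj := congrFun this j
        simp only [Pi.sub_apply, Pi.smul_apply, smul_eq_mul] at hj
        simp only [Pi.add_apply, Pi.sub_apply, Pi.smul_apply, smul_eq_mul]
        linear_combination hj
      have hXeqY : X.1 = Y.1 := by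
        rw [← hrepX X.1 X.2, ← hrepX Y.1 Y.2]
        rw [hrepeq]
        exact (fiber_eq _ ha).symm
      exact hXY (Subtype.ext hXeqY)
    · intro X _
      have := key (rep X.1 X.2) (hrepA X.1 X.2)
      rwa [hrepX X.1 X.2] at this
  -- degree bookkeeping
  have hPhom : (∏ X ∈ img.attach,
      (sigmaMap h i0 (linForm (rep X.1 X.2))) ^
        ((A'.filter fun c => hypl c ⊓ hypl h = X.1).card - 1)).IsHomogeneous
      (∑ X ∈ img.attach, ((A'.filter fun c => hypl c ⊓ hypl h = X.1).card - 1)) := by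
    apply MvPolynomial.IsHomogeneous.prod
    intro X _
    obtain ⟨hformula, hne⟩ := hproj (rep X.1 X.2) (hrepA X.1 X.2)
    rw [hformula]
    simpa using (isHomogeneous_linForm _).pow _
  have hdegle : (∑ X ∈ img.attach,
      ((A'.filter fun c => hypl c ⊓ hypl h = X.1).card - 1)) ≤ e :=
    degree_le_of_dvd_homog hPhom hσu_hom hσu_ne hcomb
  -- cardinality bookkeeping
  have hm1 : ∀ X : {x // x ∈ img}, 1 ≤ (A'.filter fun c => hypl c ⊓ hypl h = X.1).card := by
    intro X
    apply Finset.card_pos.mpr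
    exact ⟨rep X.1 X.2, Finset.mem_filter.mpr ⟨hrepA X.1 X.2, hrepX X.1 X.2⟩⟩
  have hcards : A'.card = ∑ X ∈ img.attach,
      (A'.filter fun c => hypl c ⊓ hypl h = X.1).card := by
    rw [Finset.sum_attach img (fun X => (A'.filter fun c => hypl c ⊓ hypl h = X).card)]
    exact Finset.card_eq_sum_card_image (fun c => hypl c ⊓ hypl h) A'
  have hsum : ∑ X ∈ img.attach, (A'.filter fun c => hypl c ⊓ hypl h = X.1).card
      = (∑ X ∈ img.attach, ((A'.filter fun c => hypl c ⊓ hypl h = X.1).card - 1))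
        + img.card := by
    have hpt : ∀ X ∈ img.attach, (A'.filter fun c => hypl c ⊓ hypl h = X.1).card
        = ((A'.filter fun c => hypl c ⊓ hypl h = X.1).card - 1) + 1 :=
      fun X _ => (Nat.succ_pred_eq_of_pos (hm1 X)).symm
    rw [Finset.sum_congr rfl hpt, Finset.sum_add_distrib, Finset.sum_const,
      Finset.card_attach, smul_eq_mul, mul_one]
  rw [htcount]
  calc A'.card = (∑ X ∈ img.attach,
        ((A'.filter fun c => hypl c ⊓ hypl h = X.1).card - 1)) + img.card := by
        rw [hcards, hsum]
    _ ≤ e + img.card := by omega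
    _ ≤ img.card + d := by omega
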